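/- For every R-module M, the sequence 0 → M → (R_f ⊗_R M) ⊕ (R̂ ⊗_R M) → R̂_f ⊗_R M → 0 is exact, where the first map sends m to (1 ⊗ m, 1 ⊗ m) and the second map sends (a ⊗ m, b ⊗ m') to the difference of their images in R̂_f ⊗_R M under the canonical base-change maps. -/

import Mathlib

open TensorProduct

set_option maxHeartbeats 1000000
set_option synthInstance.maxHeartbeats 400000

noncomputable section

open LinearMap in
/-- If `i : A → B` is injective with cokernel `C` flat (witnessed by an exact sequence
`0 → A → B → C → 0`), then `i ⊗ M` is injective for every module `M` (purity). -/
theorem BLpurity {S : Type*} [CommRing S]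
    {A B C : Type*} (M : Type*) [AddCommGroup A] [AddCommGroup B] [AddCommGroup C]
    [AddCommGroup M] [Module S A] [Module S B] [Module S C] [Module S M]
    {i : A →ₗ[S] B} {p : B →ₗ[S] C} (hi : Function.Injective i)
    (hip : Function.Exact i p) (hp : Function.Surjective p) [Module.Flat S C] :
    Function.Injective (rTensor M i) := by
  rw [← LinearMap.ker_eq_bot, eq_bot_iff]
  intro x hx
  have hx0 : rTensor M i x = 0 := hx
  set F := (M →₀ S) with hF
  set π : F →ₗ[S] M := Finsupp.linearCombination S _root_.id with hπdef
  have hπ : Function.Surjective π := Finsupp.linearCombination_id_surjective S M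
  set K := LinearMap.ker π with hK
  set k : K →ₗ[S] F := K.subtype with hk
  have hkπ : Function.Exact k π := LinearMap.exact_subtype_ker_map π
  obtain ⟨y0, rfl⟩ : ∃ y, lTensor A π y = x := lTensor_surjective A hπ x
  have hb : lTensor B π (rTensor F i y0) = 0 := by
    rw [← LinearMap.comp_apply, lTensor_comp_rTensor, ← rTensor_comp_lTensor,
      LinearMap.comp_apply, hx0]
  obtain ⟨y, hy⟩ := (@lTensor_exact S K F M _ _ _ _ _ _ _ k π B _ _ hkπ hπ _).mp hb
  have hz : rTensor K p y = 0 := by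
    have hinj := Module.Flat.lTensor_preserves_injective_linearMap (M := C) k
      (Submodule.injective_subtype K)
    apply hinj
    rw [map_zero, ← LinearMap.comp_apply, lTensor_comp_rTensor, ← rTensor_comp_lTensor,
      LinearMap.comp_apply, hy, ← LinearMap.comp_apply, ← rTensor_comp,
      hip.linearMap_comp_eq_zero]
    simp
  obtain ⟨y', hy'⟩ := (@rTensor_exact S A B C _ _ _ _ _ _ _ i p K _ _ hip hp _).mp hz
  have heq : y0 = lTensor A k y' := by
    have hinj2 := Module.Flat.rTensor_preserves_injective_linearMap (M := F) i hi
    apply hinj2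
    rw [← LinearMap.comp_apply, rTensor_comp_lTensor, ← lTensor_comp_rTensor,
      LinearMap.comp_apply, hy', hy]
  rw [heq]
  have hπk : π ∘ₗ k = 0 := hkπ.linearMap_comp_eq_zero
  rw [← LinearMap.comp_apply, ← lTensor_comp, hπk]
  simp

variable (R : Type*) [CommRing R] (f : R)

/-- The `(f)`-adic completion `R̂` of `R`. -/
abbrev Rhat : Type _ := AdicCompletion (Ideal.span {f}) R

/-- The localization `R_f = R[f⁻¹]`. -/
abbrev Rf : Type _ := Localization.Away f

/-- The localization `R̂_f = R̂[ι(f)⁻¹]`. -/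
abbrev Rhatf : Type _ := Localization.Away (algebraMap R (Rhat R f) f)

/-- The canonical map `R_f → R̂_f` extending `ι : R → R̂` (as an `R`-algebra map). -/
noncomputable def psiAlg : Rf R f →ₐ[R] Rhatf R f :=
  Localization.awayMapₐ (Algebra.ofId R (Rhat R f)) f

/-- The canonical map `R̂ → R̂_f` as an `R`-linear map. -/
noncomputable def thetaLin : Rhat R f →ₗ[R] Rhatf R f :=
  (IsScalarTower.toAlgHom R (Rhat R f) (Rhatf R f)).toLinearMap

/-- The canonical map `R_f → R̂_f` as an `R`-linear map. -/
noncomputable def psiLin : Rf R f →ₗ[R] Rhatf R f :=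
  (psiAlg R f).toLinearMap

/-! ### Auxiliary lemmas -/

variable {R f}

lemma BL_theta_apply (b : Rhat R f) : thetaLin R f b = algebraMap (Rhat R f) (Rhatf R f) b := rfl

lemma BL_mem_Ipow {n : ℕ} {x : R} :
    x ∈ ((Ideal.span {f}) ^ n • ⊤ : Submodule R R) ↔ ∃ c, x = f ^ n * c := by
  rw [smul_eq_mul, Ideal.mul_top, Ideal.span_singleton_pow, Ideal.mem_span_singleton']
  exact ⟨fun ⟨a, ha⟩ => ⟨a, by rw [mul_comm, ha]⟩, fun ⟨a, ha⟩ => ⟨a, by rw [mul_comm, ha]⟩⟩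

lemma BL_eval_mk (g : AdicCompletion.AdicCauchySequence (Ideal.span {f}) R) (n : ℕ) :
    AdicCompletion.eval (Ideal.span {f}) R n (AdicCompletion.mk _ _ g) =
      Submodule.Quotient.mk (g n) := rfl

lemma BL_eval_eq_of_le (g : AdicCompletion.AdicCauchySequence (Ideal.span {f}) R) {m n : ℕ}
    (h : m ≤ n) :
    AdicCompletion.eval (Ideal.span {f}) R m (AdicCompletion.mk _ _ g) =
      Submodule.Quotient.mk (g n) := by
  rw [BL_eval_mk]
  exact (AdicCompletion.AdicCauchySequence.mk_eq_mk h g).symm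

lemma BL_ext_eval {x y : AdicCompletion (Ideal.span {f}) R}
    (h : ∀ n, AdicCompletion.eval (Ideal.span {f}) R n x
      = AdicCompletion.eval (Ideal.span {f}) R n y) : x = y :=
  AdicCompletion.ext h

lemma BL_smul_f_inj (hf : f ∈ nonZeroDivisors R) {b : AdicCompletion (Ideal.span {f}) R}
    (h : f • b = 0) : b = 0 := by
  obtain ⟨g, rfl⟩ := AdicCompletion.mk_surjective (Ideal.span {f}) R b
  rw [← map_smul] at h
  apply BL_ext_eval
  intro n
  have h1 : AdicCompletion.eval (Ideal.span {f}) R (n+1) (AdicCompletion.mk _ _ (f • g)) = 0 := by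
    rw [h]; simp
  rw [BL_eval_mk, Submodule.Quotient.mk_eq_zero] at h1
  obtain ⟨c, hc⟩ := BL_mem_Ipow.mp h1
  rw [AdicCompletion.AdicCauchySequence.smul_apply, smul_eq_mul] at hc
  have hgc : (g (n+1) - f ^ n * c) * f = 0 := by rw [pow_succ] at hc; linear_combination hc
  have hg : g (n+1) = f ^ n * c := by
    have := mem_nonZeroDivisors_iff_right.mp hf _ hgc
    rwa [sub_eq_zero] at this
  rw [BL_eval_eq_of_le g (Nat.le_succ n), _root_.map_zero, Submodule.Quotient.mk_eq_zero, hg]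
  exact BL_mem_Ipow.mpr ⟨c, rfl⟩

lemma BL_pow_smul_f_inj (hf : f ∈ nonZeroDivisors R) (n : ℕ)
    {b : AdicCompletion (Ideal.span {f}) R} (h : f ^ n • b = 0) : b = 0 := by
  induction n with
  | zero => simpa using h
  | succ n ih =>
      exact ih (BL_smul_f_inj hf (by rw [pow_succ, mul_comm, mul_smul] at h; exact h))

lemma BL_eq_pow_smul_of_eval_eq_zero (hf : f ∈ nonZeroDivisors R) (n : ℕ)
    (b : AdicCompletion (Ideal.span {f}) R)
    (hb : AdicCompletion.eval (Ideal.span {f}) R n b = 0) : ∃ c, b = f ^ n • c := by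
  obtain ⟨g, rfl⟩ := AdicCompletion.mk_surjective (Ideal.span {f}) R b
  have key : ∀ m, ∃ γ, g (n + m) = f ^ n * γ := by
    intro m
    have h1 : AdicCompletion.eval (Ideal.span {f}) R n (AdicCompletion.mk _ _ g)
        = Submodule.Quotient.mk (g (n + m)) := BL_eval_eq_of_le g (Nat.le_add_right n m)
    rw [hb] at h1
    exact BL_mem_Ipow.mp ((Submodule.Quotient.mk_eq_zero _).mp h1.symm)
  choose γ hγ using key
  have hcauchy : ∀ m, γ m ≡ γ (m + 1) [SMOD ((Ideal.span {f}) ^ m • ⊤ : Submodule R R)] := by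
    intro m
    rw [SModEq.sub_mem]
    have h2 : g (n + m) ≡ g (n + (m+1)) [SMOD ((Ideal.span {f}) ^ (n+m) • ⊤ : Submodule R R)] :=
      g.property (show n + m ≤ n + (m+1) by omega)
    rw [SModEq.sub_mem] at h2
    obtain ⟨d, hd⟩ := BL_mem_Ipow.mp h2
    apply BL_mem_Ipow.mpr
    refine ⟨d, ?_⟩
    have hfn : (γ m - γ (m+1) - f ^ m * d) * f ^ n = 0 := by
      rw [hγ m, hγ (m+1)] at hd
      rw [pow_add] at hd
      linear_combination hd
    have := mem_nonZeroDivisors_iff_right.mp (pow_mem hf n) _ hfn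
    rwa [sub_eq_zero] at this
  refine ⟨AdicCompletion.mk _ _ (AdicCompletion.AdicCauchySequence.mk _ _ γ hcauchy), ?_⟩
  apply BL_ext_eval
  intro m
  rw [BL_eval_eq_of_le g (Nat.le_add_right m n), map_smul, BL_eval_mk]
  have hg' : (g : ℕ → R) (m + n) = f ^ n * γ m := by rw [Nat.add_comm]; exact hγ m
  rw [hg', ← smul_eq_mul, Submodule.Quotient.mk_smul]
  rfl

lemma BL_eval_algebraMap (n : ℕ) (x : R) :
    AdicCompletion.eval (Ideal.span {f}) R n (algebraMap R (Rhat R f) x)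
      = Submodule.Quotient.mk x := rfl

lemma BL_psi_algebraMap (x : R) :
    psiAlg R f (algebraMap R (Rf R f) x) = algebraMap R (Rhatf R f) x :=
  (psiAlg R f).commutes x

lemma BL_psi_spec (x : R) (n : ℕ) :
    psiAlg R f (IsLocalization.mk' (Rf R f) x ⟨f ^ n, pow_mem (Submonoid.mem_powers f) n⟩)
      * algebraMap (Rhat R f) (Rhatf R f) ((algebraMap R (Rhat R f) f) ^ n)
      = algebraMap (Rhat R f) (Rhatf R f) (algebraMap R (Rhat R f) x) := by
  have h1 := IsLocalization.mk'_spec (Rf R f) x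
    (⟨f ^ n, pow_mem (Submonoid.mem_powers f) n⟩ : Submonoid.powers f)
  have h2 := congrArg (psiAlg R f) h1
  rw [map_mul, BL_psi_algebraMap, BL_psi_algebraMap] at h2
  rw [← map_pow, ← IsScalarTower.algebraMap_apply R (Rhat R f) (Rhatf R f),
    ← IsScalarTower.algebraMap_apply R (Rhat R f) (Rhatf R f)]
  exact h2

lemma BL_pow_smul_quot (n : ℕ) (q : R ⧸ ((Ideal.span {f}) ^ n • ⊤ : Submodule R R)) :
    f ^ n • q = 0 := by
  obtain ⟨y, rfl⟩ := Submodule.Quotient.mk_surjective _ q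
  rw [← Submodule.Quotient.mk_smul, Submodule.Quotient.mk_eq_zero]
  exact BL_mem_Ipow.mpr ⟨y, by rw [smul_eq_mul]⟩

lemma BL_dense (hf : f ∈ nonZeroDivisors R) (n : ℕ) (b : Rhat R f) :
    ∃ x c, b = algebraMap R (Rhat R f) x + f ^ n • c := by
  obtain ⟨x, hx⟩ := Submodule.Quotient.mk_surjective _
    (AdicCompletion.eval (Ideal.span {f}) R n b)
  have h0 : AdicCompletion.eval (Ideal.span {f}) R n (b - algebraMap R (Rhat R f) x) = 0 := by
    rw [map_sub, BL_eval_algebraMap, hx, sub_self]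
  obtain ⟨c, hc⟩ := BL_eq_pow_smul_of_eval_eq_zero hf n _ h0
  exact ⟨x, c, by rw [← hc]; ring⟩

lemma BL_fhat_nzd (hf : f ∈ nonZeroDivisors R) :
    algebraMap R (Rhat R f) f ∈ nonZeroDivisors (Rhat R f) := by
  rw [mem_nonZeroDivisors_iff_right]
  intro c hc
  apply BL_pow_smul_f_inj hf 1
  rw [pow_one, Algebra.smul_def, mul_comm]
  exact hc

lemma BL_powers_le (hf : f ∈ nonZeroDivisors R) :
    Submonoid.powers (algebraMap R (Rhat R f) f) ≤ nonZeroDivisors (Rhat R f) := by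
  rintro x ⟨n, rfl⟩
  exact pow_mem (BL_fhat_nzd hf) n

lemma BL_theta_inj (hf : f ∈ nonZeroDivisors R) :
    Function.Injective (algebraMap (Rhat R f) (Rhatf R f)) :=
  IsLocalization.injective _ (BL_powers_le hf)

lemma BL_exact_middle (hf : f ∈ nonZeroDivisors R) (a : Rf R f) (b : Rhat R f)
    (hab : psiAlg R f a = algebraMap (Rhat R f) (Rhatf R f) b) :
    ∃ r, a = algebraMap R (Rf R f) r ∧ b = algebraMap R (Rhat R f) r := by
  obtain ⟨⟨x, s⟩, hs⟩ := IsLocalization.mk'_surjective (Submonoid.powers f) a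
  obtain ⟨m, hm⟩ := s.2
  have ha : a = IsLocalization.mk' (Rf R f) x ⟨f ^ m, pow_mem (Submonoid.mem_powers f) m⟩ := by
    rw [← hs]; dsimp only; congr 1; exact Subtype.ext hm.symm
  have hspec := BL_psi_spec (f := f) x m
  rw [← ha, hab, ← map_mul] at hspec
  have h3 : b * (algebraMap R (Rhat R f) f) ^ m = algebraMap R (Rhat R f) x :=
    BL_theta_inj hf hspec
  have hxb : algebraMap R (Rhat R f) x = f ^ m • b := by
    rw [Algebra.smul_def, map_pow, mul_comm]
    exact h3.symm
  have hx0 : (Submodule.Quotient.mk x :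
      R ⧸ ((Ideal.span {f}) ^ m • ⊤ : Submodule R R)) = 0 := by
    have h4 := congrArg (AdicCompletion.eval (Ideal.span {f}) R m) hxb
    rw [BL_eval_algebraMap, map_smul, BL_pow_smul_quot] at h4
    exact h4
  obtain ⟨r, hr⟩ := BL_mem_Ipow.mp ((Submodule.Quotient.mk_eq_zero _).mp hx0)
  have hb : b = algebraMap R (Rhat R f) r := by
    have h5 : f ^ m • (b - algebraMap R (Rhat R f) r) = 0 := by
      rw [smul_sub, ← hxb, hr, map_mul, map_pow, Algebra.smul_def, map_pow, sub_self]
    have := BL_pow_smul_f_inj hf m h5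
    rwa [sub_eq_zero] at this
  refine ⟨r, ?_, hb⟩
  rw [ha, hr]
  exact IsLocalization.mk'_mul_cancel_left r ⟨f ^ m, pow_mem (Submonoid.mem_powers f) m⟩

lemma BL_surj (hf : f ∈ nonZeroDivisors R) (y : Rhatf R f) :
    ∃ a c, y = psiAlg R f a + algebraMap (Rhat R f) (Rhatf R f) c := by
  obtain ⟨⟨b, s⟩, hs⟩ := IsLocalization.mk'_surjective
    (Submonoid.powers (algebraMap R (Rhat R f) f)) y
  obtain ⟨n, hn⟩ := s.2
  have hn' : (algebraMap R (Rhat R f) f) ^ n = (s : Rhat R f) := hn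
  obtain ⟨x, c, hbc⟩ := BL_dense hf n b
  set θ := algebraMap (Rhat R f) (Rhatf R f) with hθ
  set u := IsLocalization.mk' (Rhatf R f) (1 : Rhat R f) s with hu
  have hsu : θ (s : Rhat R f) * u = 1 := by
    rw [hu, hθ, IsLocalization.mk'_spec', map_one]
  set a := IsLocalization.mk' (Rf R f) x ⟨f ^ n, pow_mem (Submonoid.mem_powers f) n⟩ with hadef
  have hspec := BL_psi_spec (f := f) x n
  have hψ : θ (algebraMap R (Rhat R f) x) * u = psiAlg R f a := by
    rw [← hadef] at hspec
    rw [← hspec, mul_assoc, hn', hsu, mul_one]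
  refine ⟨a, c, ?_⟩
  calc y = IsLocalization.mk' (Rhatf R f) b s := hs.symm
    _ = θ b * u := by rw [IsLocalization.mk'_eq_mul_mk'_one, hθ, hu]
    _ = (θ (algebraMap R (Rhat R f) x) + θ ((algebraMap R (Rhat R f) f) ^ n) * θ c) * u := by
        rw [hbc, map_add, Algebra.smul_def, map_pow, map_mul]
    _ = θ (algebraMap R (Rhat R f) x) * u + θ c * (θ (s : Rhat R f) * u) := by
        rw [hn']; ring
    _ = psiAlg R f a + θ c := by rw [hsu, mul_one, hψ]

variable (R f)

/-- for every `R`-module `M`, the sequence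
`0 → M → (R_f ⊗_R M) ⊕ (R̂ ⊗_R M) → R̂_f ⊗_R M → 0` is exact, where the first map is
`m ↦ (1 ⊗ m, 1 ⊗ m)` and the second map is the difference of the two base-change maps. -/
theorem stmt5 [IsNoetherianRing R] (hf : f ∈ nonZeroDivisors R)
    (M : Type*) [AddCommGroup M] [Module R M] :
    Function.Injective
      (fun m : M => (((1 : Rf R f) ⊗ₜ[R] m : Rf R f ⊗[R] M),
        ((1 : Rhat R f) ⊗ₜ[R] m : Rhat R f ⊗[R] M))) ∧
    (∀ p : (Rf R f ⊗[R] M) × (Rhat R f ⊗[R] M),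
      LinearMap.rTensor M (psiLin R f) p.1 - LinearMap.rTensor M (thetaLin R f) p.2 = 0 ↔
        ∃ m : M, p = ((1 : Rf R f) ⊗ₜ[R] m, (1 : Rhat R f) ⊗ₜ[R] m)) ∧
    Function.Surjective
      (fun p : (Rf R f ⊗[R] M) × (Rhat R f ⊗[R] M) =>
        LinearMap.rTensor M (psiLin R f) p.1 - LinearMap.rTensor M (thetaLin R f) p.2) := by
  classical
  haveI hflat1 : Module.Flat R (Rhat R f) :=
    inferInstance
  haveI hflat2 : Module.Flat R (Rhatf R f) := Module.Flat.trans R (Rhat R f) (Rhatf R f)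
  -- the base short exact sequence 0 → R → R_f × R̂ → R̂_f → 0
  set i : R →ₗ[R] (Rf R f) × (Rhat R f) :=
    (Algebra.linearMap R (Rf R f)).prod (Algebra.linearMap R (Rhat R f)) with hidef
  set pm : (Rf R f) × (Rhat R f) →ₗ[R] Rhatf R f :=
    (psiLin R f).comp (LinearMap.fst R _ _) - (thetaLin R f).comp (LinearMap.snd R _ _)
    with hpdef
  have hple : Submonoid.powers f ≤ nonZeroDivisors R := by
    rintro x ⟨n, rfl⟩
    exact pow_mem hf n
  have hi : Function.Injective i := by
    intro r r' h
    have h1 : algebraMap R (Rf R f) r = algebraMap R (Rf R f) r' := congrArg Prod.fst h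
    exact IsLocalization.injective (Rf R f) hple h1
  have hpmapply : ∀ z : (Rf R f) × (Rhat R f),
      pm z = psiAlg R f z.1 - algebraMap (Rhat R f) (Rhatf R f) z.2 := by
    intro z
    simp [hpdef, psiLin, BL_theta_apply]
  have hexact : Function.Exact i pm := by
    intro z
    constructor
    · intro hz
      rw [hpmapply, sub_eq_zero] at hz
      obtain ⟨r, h1, h2⟩ := BL_exact_middle hf z.1 z.2 hz
      refine ⟨r, ?_⟩
      have : i r = (algebraMap R (Rf R f) r, algebraMap R (Rhat R f) r) := rfl
      rw [this, ← h1, ← h2]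
    · rintro ⟨r, rfl⟩
      rw [hpmapply]
      have : i r = (algebraMap R (Rf R f) r, algebraMap R (Rhat R f) r) := rfl
      rw [this]
      simp only [BL_psi_algebraMap]
      rw [← IsScalarTower.algebraMap_apply R (Rhat R f) (Rhatf R f), sub_self]
  have hpsurj : Function.Surjective pm := by
    intro y
    obtain ⟨a, c, hy⟩ := BL_surj hf y
    refine ⟨(a, -c), ?_⟩
    rw [hpmapply, hy]
    simp
  -- tensor the sequence with M
  have hTinj : Function.Injective (LinearMap.rTensor M i) := BLpurity M hi hexact hpsurj
  have hTexact := @rTensor_exact R _ _ _ _ _ _ _ _ _ _ i pm M _ _ hexact hpsurj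
  have hTsurj : Function.Surjective (LinearMap.rTensor M pm) :=
    LinearMap.rTensor_surjective M hpsurj
  set E := TensorProduct.prodLeft R R (Rf R f) (Rhat R f) M with hEdef
  set Dfun := (fun p : (Rf R f ⊗[R] M) × (Rhat R f ⊗[R] M) =>
    LinearMap.rTensor M (psiLin R f) p.1 - LinearMap.rTensor M (thetaLin R f) p.2) with hDdef
  have hcomm : ∀ z : ((Rf R f) × (Rhat R f)) ⊗[R] M,
      Dfun (E z) = LinearMap.rTensor M pm z := by
    intro z
    induction z with
    | zero => simp [hDdef]
    | tmul w m =>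
        obtain ⟨a, b⟩ := w
        simp only [hDdef, hEdef, TensorProduct.prodLeft_tmul, LinearMap.rTensor_tmul]
        rw [hpmapply]
        rw [TensorProduct.sub_tmul]
        rfl
    | add z1 z2 ih1 ih2 =>
        simp only [map_add, hDdef, Prod.fst_add, Prod.snd_add] at ih1 ih2 ⊢
        rw [← ih1, ← ih2]
        abel
  have hD : ∀ p : (Rf R f ⊗[R] M) × (Rhat R f ⊗[R] M),
      Dfun p = LinearMap.rTensor M pm (E.symm p) := by
    intro p
    rw [← hcomm (E.symm p), LinearEquiv.apply_symm_apply]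
  have hFeq : ∀ m : M, (((1 : Rf R f) ⊗ₜ[R] m : Rf R f ⊗[R] M),
      ((1 : Rhat R f) ⊗ₜ[R] m : Rhat R f ⊗[R] M))
        = E (LinearMap.rTensor M i ((TensorProduct.lid R M).symm m)) := by
    intro m
    rw [TensorProduct.lid_symm_apply, LinearMap.rTensor_tmul]
    have : i 1 = ((1 : Rf R f), (1 : Rhat R f)) := by
      have : i 1 = (algebraMap R (Rf R f) 1, algebraMap R (Rhat R f) 1) := rfl
      rw [this, map_one, map_one]
    rw [this, hEdef, TensorProduct.prodLeft_tmul]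
  refine ⟨?_, ?_, ?_⟩
  · intro m m' h
    have h' : (((1 : Rf R f) ⊗ₜ[R] m : Rf R f ⊗[R] M),
        ((1 : Rhat R f) ⊗ₜ[R] m : Rhat R f ⊗[R] M))
        = (((1 : Rf R f) ⊗ₜ[R] m' : Rf R f ⊗[R] M),
          ((1 : Rhat R f) ⊗ₜ[R] m' : Rhat R f ⊗[R] M)) := h
    rw [hFeq m, hFeq m'] at h'
    have h1 := hTinj (E.injective h')
    have h2 := congrArg (TensorProduct.lid R M) h1
    rwa [LinearEquiv.apply_symm_apply, LinearEquiv.apply_symm_apply] at h2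
  · intro p
    constructor
    · intro h0
      have h0' : Dfun p = 0 := h0
      rw [hD] at h0'
      obtain ⟨w, hw⟩ := (hTexact _).mp h0'
      refine ⟨TensorProduct.lid R M w, ?_⟩
      rw [hFeq, LinearEquiv.symm_apply_apply, hw, LinearEquiv.apply_symm_apply]
    · rintro ⟨m, rfl⟩
      show Dfun _ = 0
      rw [hD, hFeq m, LinearEquiv.symm_apply_apply, ← LinearMap.comp_apply, ← LinearMap.rTensor_comp,
        hexact.linearMap_comp_eq_zero]
      simp
  · intro y
    obtain ⟨z, hz⟩ := hTsurj y
    refine ⟨E z, ?_⟩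
    show Dfun (E z) = y
    rw [hcomm, hz]
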